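/- Let N ≥ 2 and u be C² on (0,1] with u_r < 0 solving −u_rr − ((N−1)/r) u_r = g(u) with g nonnegative and nondecreasing. Then r ↦ |u_r(r)|/r is nonincreasing on (0,1]. -/

import Mathlib

open Set

private lemma mem_nhds_of_Ioo {x a b : ℝ} (hx : x ∈ Ioo a b) : Ioc a b ∈ nhds x :=
  Filter.mem_of_superset (Ioo_mem_nhds hx.1 hx.2) Ioo_subset_Ioc_self

/-- For a radially decreasing solution of `−u_rr − ((N−1)/r) u_r = g(u)` with `g ≥ 0`
continuous and nondecreasing, the function `r ↦ |u_r(r)|/r` is nonincreasing on `(0,1]`. -/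
theorem urOverR_antitone (N : ℕ) (hN : 2 ≤ N) (u u' u'' : ℝ → ℝ) (g : ℝ → ℝ)
    (hgcont : Continuous g) (hgpos : ∀ s, 0 ≤ g s) (hgmono : Monotone g)
    (hu : ∀ r ∈ Set.Ioc (0 : ℝ) 1, HasDerivWithinAt u (u' r) (Set.Ioc (0 : ℝ) 1) r)
    (hu' : ∀ r ∈ Set.Ioc (0 : ℝ) 1, HasDerivWithinAt u' (u'' r) (Set.Ioc (0 : ℝ) 1) r)
    (hu'neg : ∀ r ∈ Set.Ioc (0 : ℝ) 1, u' r < 0)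
    (heq : ∀ r ∈ Set.Ioc (0 : ℝ) 1, -u'' r - ((N : ℝ) - 1) / r * u' r = g (u r)) :
    AntitoneOn (fun r => |u' r| / r) (Set.Ioc (0 : ℝ) 1) := by
  have hNR : (2 : ℝ) ≤ (N : ℝ) := by exact_mod_cast hN
  have hN0 : (N : ℝ) ≠ 0 := by positivity
  have hNsub : ((N - 1 : ℕ) : ℝ) = (N : ℝ) - 1 := by
    have : 1 ≤ N := le_trans (by norm_num) hN
    push_cast [Nat.cast_sub this]; ring
  -- `u` and `u'` have full derivatives at interior points
  have hux : ∀ x ∈ Ioo (0:ℝ) 1, HasDerivAt u (u' x) x := fun x hx =>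
    (hu x (Ioo_subset_Ioc_self hx)).hasDerivAt (mem_nhds_of_Ioo hx)
  have hu'x : ∀ x ∈ Ioo (0:ℝ) 1, HasDerivAt u' (u'' x) x := fun x hx =>
    (hu' x (Ioo_subset_Ioc_self hx)).hasDerivAt (mem_nhds_of_Ioo hx)
  -- u is antitone on Ioc 0 1
  have huant : AntitoneOn u (Ioc (0:ℝ) 1) := by
    apply antitoneOn_of_hasDerivWithinAt_nonpos (convex_Ioc 0 1)
      (fun x hx => (hu x hx).continuousWithinAt)
      (f' := u')
    · intro x hx
      rw [interior_Ioc] at hx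
      exact ((hux x hx).hasDerivWithinAt)
    · intro x hx
      rw [interior_Ioc] at hx
      exact (hu'neg x (Ioo_subset_Ioc_self hx)).le
  -- key pointwise estimate : r * g(u r) + N * u' r ≤ 0
  have key : ∀ r₀ ∈ Ioc (0:ℝ) 1, r₀ * g (u r₀) + (N : ℝ) * u' r₀ ≤ 0 := by
    intro r₀ hr₀
    set c : ℝ := g (u r₀) with hc
    set w : ℝ → ℝ := fun r => r ^ (N - 1) * u' r + c * r ^ N / N with hw
    -- w is antitone on Ioc 0 r₀
    have hwant : AntitoneOn w (Ioc (0:ℝ) r₀) := by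
      apply antitoneOn_of_hasDerivWithinAt_nonpos (convex_Ioc 0 r₀)
        (f' := fun x => x ^ (N - 1) * (c - g (u x)))
      · intro x hx
        have hx1 : x ∈ Ioc (0:ℝ) 1 := ⟨hx.1, hx.2.trans hr₀.2⟩
        have : ContinuousWithinAt u' (Ioc (0:ℝ) r₀) x :=
          ((hu' x hx1).continuousWithinAt).mono (Ioc_subset_Ioc le_rfl hr₀.2)
        exact ((continuousWithinAt_id.pow _).mul this).add
          (((continuousWithinAt_id.pow N).const_mul c).div_const _)
      · intro x hx
        rw [interior_Ioc] at hx
        have hx1 : x ∈ Ioo (0:ℝ) 1 := ⟨hx.1, lt_of_lt_of_le hx.2 hr₀.2⟩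
        have hx1' : x ∈ Ioc (0:ℝ) 1 := Ioo_subset_Ioc_self hx1
        have hxne : x ≠ 0 := ne_of_gt hx.1
        have hD : HasDerivAt w
            ((↑(N-1) * x ^ (N-1-1) * u' x + x ^ (N-1) * u'' x) + c * (↑N * x ^ (N-1)) / ↑N) x :=
          ((hasDerivAt_pow (N-1) x).mul (hu'x x hx1)).add
            (((hasDerivAt_pow N x).const_mul c).div_const _)
        have hu''eq : u'' x = -(((N:ℝ) - 1) / x * u' x) - g (u x) := by
          have := heq x hx1'
          linarith
        have hpow : x ^ (N - 1) = x * x ^ (N - 1 - 1) := by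
          rw [← pow_succ']
          congr 1
          omega
        have : (↑(N-1) * x ^ (N-1-1) * u' x + x ^ (N-1) * u'' x) + c * (↑N * x ^ (N-1)) / ↑N
            = x ^ (N - 1) * (c - g (u x)) := by
          rw [hu''eq, hNsub, hpow]
          field_simp
          ring
        rw [this] at hD
        exact hD.hasDerivWithinAt
      · intro x hx
        rw [interior_Ioc] at hx
        have hx1' : x ∈ Ioc (0:ℝ) 1 := ⟨hx.1, hx.2.le.trans hr₀.2⟩
        have hcx : c ≤ g (u x) := hgmono (huant hx1' hr₀ hx.2.le)
        have : (0:ℝ) ≤ x ^ (N - 1) := pow_nonneg hx.1.le _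
        nlinarith
    -- bound w r₀ by letting ε → 0⁺
    have hwr₀ : w r₀ ≤ 0 := by
      have htend : Filter.Tendsto (fun ε : ℝ => c * ε ^ N / N) (nhdsWithin 0 (Ioi 0)) (nhds 0) := by
        have : Filter.Tendsto (fun ε : ℝ => c * ε ^ N / N) (nhds 0) (nhds (c * 0 ^ N / N)) :=
          (((continuous_const.mul (continuous_pow N)).div_const _).tendsto 0)
        simpa [zero_pow (by omega : N ≠ 0)] using this.mono_left nhdsWithin_le_nhds
      refine ge_of_tendsto htend ?_
      filter_upwards [Ioc_mem_nhdsGT_of_mem (by simp [hr₀.1] : (0:ℝ) ∈ Ico 0 r₀)] with ε hε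
      have hε1 : ε ∈ Ioc (0:ℝ) 1 := ⟨hε.1, hε.2.trans hr₀.2⟩
      have h1 : w r₀ ≤ w ε := hwant hε (right_mem_Ioc.2 hr₀.1) hε.2
      have h2 : ε ^ (N-1) * u' ε ≤ 0 :=
        mul_nonpos_of_nonneg_of_nonpos (pow_nonneg hε.1.le _) (hu'neg ε hε1).le
      calc w r₀ ≤ w ε := h1
        _ ≤ c * ε ^ N / N := by simp only [hw]; linarith
    -- deduce the estimate
    have hr₀pos : (0:ℝ) < r₀ := hr₀.1
    have hpowpos : (0:ℝ) < r₀ ^ (N - 1) := pow_pos hr₀pos _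
    have hpow : r₀ ^ N = r₀ ^ (N-1) * r₀ := by
      rw [← pow_succ]
      congr 1
      omega
    have h1 : r₀ ^ (N-1) * u' r₀ + c * (r₀ ^ (N-1) * r₀) / N ≤ 0 := by
      simpa [hw, hpow] using hwr₀
    have hNpos : (0:ℝ) < (N:ℝ) := by positivity
    have hmul : r₀ ^ (N-1) * ((N:ℝ) * u' r₀ + c * r₀) ≤ r₀ ^ (N-1) * 0 := by
      have : r₀ ^ (N-1) * ((N:ℝ) * u' r₀ + c * r₀)
          = (N:ℝ) * (r₀ ^ (N-1) * u' r₀ + c * (r₀ ^ (N-1) * r₀) / N) := by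
        field_simp
      rw [this, mul_zero]
      exact mul_nonpos_of_nonneg_of_nonpos hNpos.le h1
    have h2 : (N:ℝ) * u' r₀ + c * r₀ ≤ 0 := le_of_mul_le_mul_left hmul hpowpos
    linarith
  -- the function -u'/r is antitone
  have hmain : AntitoneOn (fun r => -u' r / r) (Ioc (0:ℝ) 1) := by
    apply antitoneOn_of_hasDerivWithinAt_nonpos (convex_Ioc 0 1)
      (f' := fun x => (-u'' x * x - -u' x * 1) / x ^ 2)
    · intro x hx
      exact ((hu' x hx).continuousWithinAt.neg).div continuousWithinAt_id (ne_of_gt hx.1)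
    · intro x hx
      rw [interior_Ioc] at hx
      exact (((hu'x x hx).neg.div (hasDerivAt_id x) (ne_of_gt hx.1))).hasDerivWithinAt
    · intro x hx
      rw [interior_Ioc] at hx
      have hx1 : x ∈ Ioc (0:ℝ) 1 := Ioo_subset_Ioc_self hx
      have hnum : -u'' x * x - -u' x * 1 = x * g (u x) + (N:ℝ) * u' x := by
        have h := heq x hx1
        have hxne : x ≠ 0 := ne_of_gt hx.1
        field_simp at h ⊢
        nlinarith [h]
      rw [hnum]
      have := key x hx1
      have : x * g (u x) + (N:ℝ) * u' x ≤ 0 := by linarith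
      exact div_nonpos_of_nonpos_of_nonneg this (sq_nonneg x)
  intro a ha b hb hab
  have := hmain ha hb hab
  simpa [abs_of_neg (hu'neg a ha), abs_of_neg (hu'neg b hb), neg_div] using this
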